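/- Let n > 0, γ₀ > 0 and T₀ > 0, and define ρ(t) = n^{-1}(T₀ + γ₀ t)^{-1/2} for t ≥ 0. Let 0 ≤ t₁ ≤ T and let f : [t₁, T] → ℝ be differentiable with f(t₁) ≤ (7/5)ρ(t₁). Suppose that for every t ∈ [t₁, T], f'(t) ≤ −(γ₀ n²/2) f(t)³ + ε n² ρ(t)³, where ε is a constant with 0 ≤ ε ≤ γ₀/2. Then f(t) ≤ (7/5)ρ(t) for all t ∈ [t₁, T]. -/

import Mathlib

open Set

/-- Comparison argument for the decay of the higher bound states (Lemma 4.5):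
with `ρ(t) = n^{-1}(T₀ + γ₀ t)^{-1/2}`, if `f(t₁) ≤ (7/5)ρ(t₁)` and
`f' ≤ −(γ₀ n²/2) f³ + ε n² ρ³` on `[t₁,T]` with `0 ≤ ε ≤ γ₀/2`, then
`f ≤ (7/5)ρ` on `[t₁,T]`. -/
theorem stmt18 (n γ₀ T₀ : ℝ) (hn : 0 < n) (hγ : 0 < γ₀) (hT₀ : 0 < T₀)
    (t₁ T : ℝ) (ht₁ : 0 ≤ t₁) (htT : t₁ ≤ T)
    (f f' : ℝ → ℝ) (ε : ℝ) (hε0 : 0 ≤ ε) (hε : ε ≤ γ₀ / 2)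
    (hf : ∀ t ∈ Icc t₁ T, HasDerivAt f (f' t) t)
    (hini : f t₁ ≤ 7 / 5 * (n⁻¹ * (T₀ + γ₀ * t₁) ^ (-(1 : ℝ) / 2)))
    (hf' : ∀ t ∈ Icc t₁ T,
      f' t ≤ -(γ₀ * n ^ 2 / 2) * f t ^ 3
        + ε * n ^ 2 * (n⁻¹ * (T₀ + γ₀ * t) ^ (-(1 : ℝ) / 2)) ^ 3) :
    ∀ t ∈ Icc t₁ T, f t ≤ 7 / 5 * (n⁻¹ * (T₀ + γ₀ * t) ^ (-(1 : ℝ) / 2)) := by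
  set B : ℝ → ℝ := fun t => 7 / 5 * (n⁻¹ * (T₀ + γ₀ * t) ^ (-(1 : ℝ) / 2)) with hB
  set B' : ℝ → ℝ := fun t =>
    7 / 5 * (n⁻¹ * (γ₀ * (-(1 : ℝ) / 2) * (T₀ + γ₀ * t) ^ (-(1 : ℝ) / 2 - 1))) with hB'
  have hw : ∀ t ∈ Icc t₁ T, 0 < T₀ + γ₀ * t := fun t ht => by
    have : 0 ≤ γ₀ * t := mul_nonneg hγ.le (ht₁.trans ht.1)
    linarith
  have hBderiv : ∀ t ∈ Icc t₁ T, HasDerivAt B (B' t) t := by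
    intro t ht
    have h1 : HasDerivAt (fun s : ℝ => T₀ + γ₀ * s) γ₀ t := by
      simpa using ((hasDerivAt_id t).const_mul γ₀).const_add T₀
    have h2 := h1.rpow_const (p := -(1 : ℝ) / 2) (Or.inl (hw t ht).ne')
    exact ((h2.const_mul n⁻¹).const_mul (7 / 5 : ℝ))
  have key : ∀ x ∈ Icc t₁ T, f x ≤ B x := by
    refine fun x hx =>
      image_le_of_deriv_right_lt_deriv_boundary'
        (fun s hs => ((hf s hs).continuousAt).continuousWithinAt)
        (fun s hs => ((hf s (Ico_subset_Icc_self hs)).hasDerivWithinAt))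
        hini (fun s hs => (hBderiv s hs).continuousAt.continuousWithinAt)
        (fun s hs => (hBderiv s (Ico_subset_Icc_self hs)).hasDerivWithinAt)
        ?_ hx
    intro s hs hcontact
    have hs' : s ∈ Icc t₁ T := Ico_subset_Icc_self hs
    have hwpos := hw s hs'
    set w : ℝ := T₀ + γ₀ * s
    have hcube : ((w : ℝ) ^ (-(1 : ℝ) / 2)) ^ 3 = w ^ (-(3 : ℝ) / 2) := by
      rw [← Real.rpow_natCast (w ^ (-(1 : ℝ) / 2)) 3, ← Real.rpow_mul hwpos.le]
      norm_num
    have hwm : w ^ (-(1 : ℝ) / 2 - 1) = w ^ (-(3 : ℝ) / 2) := by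
      norm_num
    have hupos : 0 < w ^ (-(3 : ℝ) / 2) := Real.rpow_pos_of_pos hwpos _
    have h1 := hf' s hs'
    rw [hcontact] at h1
    have hBval : B s = 7 / 5 * (n⁻¹ * w ^ (-(1 : ℝ) / 2)) := rfl
    calc f' s ≤ -(γ₀ * n ^ 2 / 2) * (B s) ^ 3
          + ε * n ^ 2 * (n⁻¹ * w ^ (-(1 : ℝ) / 2)) ^ 3 := h1
      _ = (-(γ₀ / 2) * (343 / 125) + ε) * (n⁻¹ * w ^ (-(3 : ℝ) / 2)) := by
          rw [hBval]; simp only [mul_pow, hcube]; field_simp; ring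
      _ ≤ (-(γ₀ / 2) * (343 / 125) + γ₀ / 2) * (n⁻¹ * w ^ (-(3 : ℝ) / 2)) := by
          apply mul_le_mul_of_nonneg_right (by linarith)
          positivity
      _ < (-(γ₀ * (7 / 10))) * (n⁻¹ * w ^ (-(3 : ℝ) / 2)) := by
          apply mul_lt_mul_of_pos_right (by nlinarith) (by positivity)
      _ = B' s := by
          show _ = 7 / 5 * (n⁻¹ * (γ₀ * (-(1 : ℝ) / 2) * w ^ (-(1 : ℝ) / 2 - 1)))
          rw [hwm]; ring
  exact key
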